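/- Let w̄ > 0, ℓ > 0, ξ ∈ (-ℓ,ℓ), and for ε > 0 let κ₋(ε) > w̄²/2 be the unique solution of √(2κ) tanh((ℓ+ξ)√(κ/2)/ε) = w̄. Then κ₋(ε) → w̄²/2 as ε → 0⁺. -/
import Mathlib


open Real Set Filter

lemma mytanh_pos {x : ℝ} (hx : 0 < x) : 0 < Real.tanh x := by
  rw [Real.tanh_eq_sinh_div_cosh]
  exact div_pos (by rwa [Real.sinh_pos_iff]) (Real.cosh_pos x)

lemma mytanh_mono {x y : ℝ} (h : x ≤ y) : Real.tanh x ≤ Real.tanh y := by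
  rw [Real.tanh_eq_sinh_div_cosh, Real.tanh_eq_sinh_div_cosh,
    div_le_div_iff₀ (Real.cosh_pos x) (Real.cosh_pos y)]
  have h0 : (0:ℝ) ≤ Real.sinh (y - x) := by
    rw [show (0:ℝ) = Real.sinh 0 by simp]
    exact Real.sinh_le_sinh.2 (by linarith)
  rw [Real.sinh_sub] at h0
  nlinarith [Real.cosh_pos x, Real.cosh_pos y]

lemma mytanh_eq (x : ℝ) : Real.tanh x = 1 - Real.exp (-x) / Real.cosh x := by
  have hc := (Real.cosh_pos x).ne'
  have h : Real.sinh x = Real.cosh x - Real.exp (-x) := by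
    linarith [Real.cosh_sub_sinh x]
  rw [Real.tanh_eq_sinh_div_cosh, h]
  field_simp

lemma mytanh_tendsto : Tendsto Real.tanh atTop (nhds 1) := by
  have h0 : Tendsto (fun x : ℝ => Real.exp (-x) / Real.cosh x) atTop (nhds 0) := by
    have hb : ∀ x : ℝ, Real.exp (-x) / Real.cosh x ≤ 2 * Real.exp (-(2*x)) := by
      intro x
      have h1 : Real.exp x / 2 ≤ Real.cosh x := by
        rw [Real.cosh_eq]
        have := (Real.exp_pos (-x)).le
        linarith
      have h2 : Real.exp (-x) / Real.cosh x ≤ Real.exp (-x) / (Real.exp x / 2) := by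
        gcongr
      refine h2.trans_eq ?_
      rw [show -(2*x) = -x + -x by ring, Real.exp_add, Real.exp_neg]
      field_simp
    have hlim : Tendsto (fun x : ℝ => 2 * Real.exp (-(2*x))) atTop (nhds 0) := by
      have h2x : Tendsto (fun x : ℝ => 2*x) atTop atTop :=
        tendsto_id.const_mul_atTop two_pos
      have := (Real.tendsto_exp_neg_atTop_nhds_zero.comp h2x).const_mul (2:ℝ)
      simpa [Function.comp] using this
    exact squeeze_zero (fun x => by positivity) hb hlim
  have := (tendsto_const_nhds (x := (1:ℝ)) (f := atTop)).sub h0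
  simp only [sub_zero] at this
  refine this.congr fun x => (mytanh_eq x).symm

/-- With `w̄, ℓ > 0`, `ξ ∈ (-ℓ,ℓ)` fixed, and `κ₋(ε)` the unique solution in
`(w̄²/2,∞)` of `√(2κ)·tanh(((ℓ+ξ)/ε)·√(κ/2)) = w̄`, one has `κ₋(ε) → w̄²/2`
as `ε → 0⁺`. -/
theorem stmt10 (wbar ℓ ξ : ℝ) (hwbar : 0 < wbar) (hℓ : 0 < ℓ)
    (hξ : ξ ∈ Ioo (-ℓ) ℓ) (κm : ℝ → ℝ)
    (hκm : ∀ ε > (0:ℝ), κm ε ∈ Ioi (wbar^2 / 2) ∧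
      Real.sqrt (2 * κm ε) * Real.tanh ((ℓ + ξ) / ε * Real.sqrt (κm ε / 2)) = wbar) :
    Tendsto κm (nhdsWithin 0 (Ioi 0)) (nhds (wbar^2 / 2)) := by
  have hlξ : 0 < ℓ + ξ := by have := hξ.1; linarith
  set c : ℝ := (ℓ + ξ) * wbar / 2 with hcdef
  have hc : 0 < c := by positivity
  -- the upper bound function
  have hg : Tendsto (fun ε : ℝ => wbar^2 / (2 * Real.tanh (c/ε)^2))
      (nhdsWithin 0 (Ioi 0)) (nhds (wbar^2 / 2)) := by
    have h1 : Tendsto (fun ε : ℝ => c/ε) (nhdsWithin 0 (Ioi 0)) atTop := by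
      simpa [div_eq_mul_inv] using tendsto_inv_nhdsGT_zero.const_mul_atTop hc
    have h2 : Tendsto (fun ε : ℝ => Real.tanh (c/ε)) (nhdsWithin 0 (Ioi 0)) (nhds 1) :=
      mytanh_tendsto.comp h1
    have h3 : Tendsto (fun ε : ℝ => wbar^2 / (2 * Real.tanh (c/ε)^2))
        (nhdsWithin 0 (Ioi 0)) (nhds (wbar^2 / (2 * 1^2))) :=
      tendsto_const_nhds.div (tendsto_const_nhds.mul (h2.pow 2)) (by norm_num)
    simpa using h3
  refine tendsto_of_tendsto_of_tendsto_of_le_of_le' tendsto_const_nhds hg ?_ ?_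
  · filter_upwards [self_mem_nhdsWithin] with ε hε
    exact (hκm ε hε).1.le
  · filter_upwards [self_mem_nhdsWithin] with ε hε
    have hε' : (0:ℝ) < ε := hε
    obtain ⟨hκ, heq⟩ := hκm ε hε'
    rw [mem_Ioi] at hκ
    set κ := κm ε with hκdef
    have hκpos : 0 < κ := lt_trans (by positivity) hκ
    set t : ℝ := (ℓ + ξ) / ε * Real.sqrt (κ / 2) with htdef
    have hsq : wbar / 2 ≤ Real.sqrt (κ / 2) := by
      rw [show wbar / 2 = Real.sqrt ((wbar/2)^2) from (Real.sqrt_sq (by positivity)).symm]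
      exact Real.sqrt_le_sqrt (by nlinarith)
    have ht : c / ε ≤ t := by
      have h1 : c / ε = (ℓ + ξ) / ε * (wbar / 2) := by field_simp; ring
      rw [h1, htdef]
      exact mul_le_mul_of_nonneg_left hsq (by positivity)
    have htc : 0 < Real.tanh (c / ε) := mytanh_pos (div_pos hc hε')
    have htt : Real.tanh (c / ε) ≤ Real.tanh t := mytanh_mono ht
    have httpos : 0 < Real.tanh t := lt_of_lt_of_le htc htt
    have h2κ : κ = wbar^2 / (2 * Real.tanh t ^ 2) := by
      have hs : Real.sqrt (2 * κ) = wbar / Real.tanh t := by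
        rw [eq_div_iff httpos.ne']; exact heq
      have h2 : 2 * κ = wbar^2 / Real.tanh t ^ 2 := by
        calc 2 * κ = Real.sqrt (2 * κ) ^ 2 := (Real.sq_sqrt (by positivity)).symm
          _ = (wbar / Real.tanh t) ^ 2 := by rw [hs]
          _ = wbar^2 / Real.tanh t ^ 2 := div_pow _ _ _
      field_simp at h2 ⊢
      linarith
    rw [h2κ]
    gcongr
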